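/- Fix s < 0 and x, y ∈ ℝ. For z > 0 define τ₁(z) := (1 + 6s·z⁴)/(3z⁶), τ₂(z) := (1 − 6s·z⁴)/(3z⁶), ξ(z) := (2/27)(3τ₁(z))^{3/2} − (3τ₁(z))^{1/6}·x, and η(z) := (2/27)(3τ₂(z))^{3/2} − (3τ₂(z))^{1/6}·y. Then, as z → 0⁺, (3τ₁(z))^{1/12}·(3τ₂(z))^{1/12}·exp((Φ(x,s;z⁴) − h(x,s;z⁴)) − (Φ(y,−s;z⁴) − h(y,−s;z⁴)))·p^P(τ₂(z) − τ₁(z); ξ(z), η(z)) − p^A(−2s; x, y) = O(z⁸). -/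

import Mathlib

open Filter Set Asymptotics
open scoped Topology

/-- The rational function
`Φ(x,t;u) = −1/(4(3u)³) − t/(3u)² + (x − t²)/(3u) + (4/3)tx + (u/6)t²x`. -/
noncomputable def PhiFun (x t u : ℝ) : ℝ :=
  -1 / (4 * (3 * u) ^ 3) - t / (3 * u) ^ 2 + (x - t ^ 2) / (3 * u)
    + (4 / 3) * t * x + (u / 6) * t ^ 2 * x

/-- `h(x,t;u) = (ux/4)(x + 6t²)`. -/
noncomputable def hFun (x t u : ℝ) : ℝ := (u * x / 4) * (x + 6 * t ^ 2)

/-- The Pearcey Gaussian transition density `p^P(τ;ξ,η)`. -/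
noncomputable def pP (τ ξ η : ℝ) : ℝ :=
  (1 / Real.sqrt (2 * Real.pi * τ)) * Real.exp (-(ξ - η) ^ 2 / (2 * τ))

/-- The Airy Gaussian factor `p^A(t;x,y)`. -/
noncomputable def pA (t x y : ℝ) : ℝ :=
  (1 / Real.sqrt (4 * Real.pi * t)) *
    Real.exp (t ^ 3 / 12 - (x - y) ^ 2 / (4 * t) - t * (x + y) / 2)

lemma eventually_pos_one_add (c : ℝ) : ∀ᶠ v : ℝ in 𝓝 0, 0 < 1 + c * v := by
  have h : Tendsto (fun v : ℝ => 1 + c * v) (𝓝 0) (𝓝 1) := by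
    have : ContinuousAt (fun v : ℝ => 1 + c * v) 0 := by fun_prop
    simpa using this.tendsto
  exact h.eventually (eventually_gt_nhds one_pos)

/-- `(1+cv)^p` is real-analytic at `0`. -/
lemma analyticAt_one_add_rpow (c p : ℝ) :
    AnalyticAt ℝ (fun v : ℝ => (1 + c * v) ^ p) 0 := by
  have haff : AnalyticAt ℝ (fun v : ℝ => 1 + c * v) 0 :=
    analyticAt_const.add (analyticAt_const.mul analyticAt_id)
  have hC : AnalyticAt ℝ (fun v : ℝ => ((1 + c * v : ℝ) : ℂ)) 0 :=
    (Complex.ofRealCLM.analyticAt _).comp haff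
  have hclog : AnalyticAt ℝ Complex.log (((1 + c * (0:ℝ) : ℝ)) : ℂ) := by
    refine (analyticAt_clog ?_).restrictScalars
    simp [Complex.mem_slitPlane_iff]
  have hlogC : AnalyticAt ℝ (fun v : ℝ => Complex.log ((1 + c * v : ℝ) : ℂ)) 0 := by
    have h2 : AnalyticAt ℝ Complex.log ((fun v : ℝ => ((1 + c * v : ℝ) : ℂ)) 0) := by
      simpa using hclog
    have := AnalyticAt.comp (g := Complex.log) (f := fun v : ℝ => ((1 + c * v : ℝ) : ℂ)) (x := (0:ℝ)) h2 hC
    exact this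
  have hre : AnalyticAt ℝ (fun v : ℝ => (Complex.log ((1 + c * v : ℝ) : ℂ)).re) 0 :=
    (Complex.reCLM.analyticAt _).comp hlogC
  have hlog : AnalyticAt ℝ (fun v : ℝ => Real.log (1 + c * v)) 0 := by
    refine hre.congr ?_
    filter_upwards [eventually_pos_one_add c] with v hv
    exact Complex.log_ofReal_re _
  have hexp : AnalyticAt ℝ (fun v : ℝ => Real.exp (Real.log (1 + c * v) * p)) 0 :=
    analyticAt_rexp.comp (hlog.mul analyticAt_const)
  refine hexp.congr ?_
  filter_upwards [eventually_pos_one_add c] with v hv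
  rw [Real.rpow_def_of_pos hv]

lemma hasDerivAt_one_add_rpow {c p v : ℝ} (hv : 0 < 1 + c * v) :
    HasDerivAt (fun w : ℝ => (1 + c * w) ^ p) (p * (1 + c * v) ^ (p - 1) * c) v := by
  have h1 : HasDerivAt (fun w : ℝ => 1 + c * w) c v := by
    simpa using ((hasDerivAt_id v).const_mul c).const_add 1
  have h2 : HasDerivAt (fun u : ℝ => u ^ p) (p * (1 + c * v) ^ (p - 1)) (1 + c * v) :=
    Real.hasDerivAt_rpow_const (Or.inl (ne_of_gt hv))
  exact h2.comp v h1

lemma iteratedDeriv_smul_one_add_rpow (c : ℝ) : ∀ (k : ℕ) (a p : ℝ),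
    iteratedDeriv k (fun v : ℝ => a * (1 + c * v) ^ p) 0
      = a * c ^ k * ∏ i ∈ Finset.range k, (p - i) := by
  intro k
  induction k with
  | zero => intro a p; simp [iteratedDeriv_zero]
  | succ k ih =>
    intro a p
    rw [iteratedDeriv_succ']
    have hev : (deriv fun v : ℝ => a * (1 + c * v) ^ p)
        =ᶠ[𝓝 (0:ℝ)] (fun v : ℝ => (a * c * p) * (1 + c * v) ^ (p - 1)) := by
      filter_upwards [eventually_pos_one_add c] with v hv
      have h := (hasDerivAt_one_add_rpow (p := p) hv).const_mul a
      rw [h.deriv]; ring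
    rw [hev.iteratedDeriv_eq k, ih (a * c * p) (p - 1)]
    have hprod : ∏ i ∈ Finset.range k, ((p - 1) - (i:ℝ))
        = ∏ i ∈ Finset.range k, (p - ((i:ℝ) + 1)) :=
      Finset.prod_congr rfl (by intro i _; ring)
    rw [Finset.prod_range_succ']
    push_cast
    rw [hprod]
    ring

lemma iteratedDeriv_one_add_rpow (c p : ℝ) (k : ℕ) :
    iteratedDeriv k (fun v : ℝ => (1 + c * v) ^ p) 0
      = c ^ k * ∏ i ∈ Finset.range k, (p - i) := by
  have := iteratedDeriv_smul_one_add_rpow c k 1 p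
  simpa using this

/-- Taylor's theorem for analytic functions, big-O form. -/
lemma taylor_isBigO {f : ℝ → ℝ} (hf : AnalyticAt ℝ f 0) (n : ℕ) :
    (fun v : ℝ => f v - ∑ k ∈ Finset.range n,
        (iteratedDeriv k f 0 / (Nat.factorial k)) * v ^ k)
      =O[𝓝 0] (fun v : ℝ => v ^ n) := by
  obtain ⟨p, hp⟩ := hf
  obtain ⟨r, hpr⟩ := hp
  have hps : ∀ y : ℝ, p.partialSum n y
      = ∑ k ∈ Finset.range n, (iteratedDeriv k f 0 / (Nat.factorial k)) * y ^ k := by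
    intro y
    unfold FormalMultilinearSeries.partialSum
    refine Finset.sum_congr rfl fun k _ => ?_
    have h1 : (p k fun _ : Fin k => y) = y ^ k * (p k fun _ : Fin k => 1) := by
      have := (p k).map_smul_univ (fun _ : Fin k => y) (fun _ : Fin k => (1:ℝ))
      simpa [smul_eq_mul] using this.symm
    have h2 : (k.factorial : ℝ) * (p k fun _ : Fin k => 1) = iteratedDeriv k f 0 := by
      have := hpr.factorial_smul (1:ℝ) k
      rw [iteratedDeriv_eq_iteratedFDeriv]
      simpa [nsmul_eq_mul] using this
    have hk : (k.factorial : ℝ) ≠ 0 := by positivity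
    rw [h1, ← h2]
    field_simp
  have h := hpr.hasFPowerSeriesAt.isBigO_sub_partialSum_pow n
  simp only [zero_add, hps] at h
  have h2 : (fun y : ℝ => ‖y‖ ^ n) = fun y : ℝ => ‖y ^ n‖ := by
    funext y; rw [norm_pow]
  rw [h2] at h
  exact (isBigO_norm_right (f := fun y : ℝ => f y - ∑ k ∈ Finset.range n, (iteratedDeriv k f 0 / (Nat.factorial k)) * y ^ k) (g' := fun v : ℝ => v ^ n) (l := 𝓝 0)).mp h

lemma rpow32_taylor (c : ℝ) :
    (fun v : ℝ => (1 + c * v) ^ ((3:ℝ)/2)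
        - (1 + (3/2)*c*v + (3/8)*c^2*v^2 - (1/16)*c^3*v^3 + (3/128)*c^4*v^4))
      =O[𝓝 0] (fun v : ℝ => v ^ 5) := by
  have h := taylor_isBigO (analyticAt_one_add_rpow c ((3:ℝ)/2)) 5
  have hsum : ∀ v : ℝ, (∑ k ∈ Finset.range 5,
      (iteratedDeriv k (fun v : ℝ => (1 + c * v) ^ ((3:ℝ)/2)) 0 / (Nat.factorial k)) * v ^ k)
      = 1 + (3/2)*c*v + (3/8)*c^2*v^2 - (1/16)*c^3*v^3 + (3/128)*c^4*v^4 := by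
    intro v
    simp only [Finset.sum_range_succ, Finset.range_zero, Finset.sum_empty,
      iteratedDeriv_one_add_rpow, Finset.prod_range_succ, Finset.prod_range_zero]
    norm_num [Nat.factorial]
    ring
  simp only [hsum] at h
  exact h

lemma rpow16_taylor (c : ℝ) :
    (fun v : ℝ => (1 + c * v) ^ ((1:ℝ)/6)
        - (1 + (1/6)*c*v - (5/72)*c^2*v^2))
      =O[𝓝 0] (fun v : ℝ => v ^ 3) := by
  have h := taylor_isBigO (analyticAt_one_add_rpow c ((1:ℝ)/6)) 3
  have hsum : ∀ v : ℝ, (∑ k ∈ Finset.range 3,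
      (iteratedDeriv k (fun v : ℝ => (1 + c * v) ^ ((1:ℝ)/6)) 0 / (Nat.factorial k)) * v ^ k)
      = 1 + (1/6)*c*v - (5/72)*c^2*v^2 := by
    intro v
    simp only [Finset.sum_range_succ, Finset.range_zero, Finset.sum_empty,
      iteratedDeriv_one_add_rpow, Finset.prod_range_succ, Finset.prod_range_zero]
    norm_num [Nat.factorial]
    ring
  simp only [hsum] at h
  exact h

/-- The rescaled Gaussian argument function. -/
noncomputable def KK (s x y v : ℝ) : ℝ :=
  (2/27) * ((1 + 6*s*v) ^ ((3:ℝ)/2) - (1 - 6*s*v) ^ ((3:ℝ)/2))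
    - v^2 * ((1 + 6*s*v) ^ ((1:ℝ)/6) * x - (1 - 6*s*v) ^ ((1:ℝ)/6) * y)

/-- Fourth-order Taylor polynomial of `KK`. -/
noncomputable def PP (s x y v : ℝ) : ℝ :=
  (4*s/3)*v - (x-y)*v^2 + (-2*s^3 - s*(x+y))*v^3 + (5/2)*s^2*(x-y)*v^4

lemma KK_sub_PP (s x y : ℝ) :
    (fun v : ℝ => KK s x y v - PP s x y v) =O[𝓝 0] (fun v : ℝ => v^5) := by
  have h1 := (rpow32_taylor (6*s)).const_mul_left ((2:ℝ)/27)
  have h2 := (rpow32_taylor (-(6*s))).const_mul_left ((2:ℝ)/27)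
  have h3 := ((isBigO_refl (fun v : ℝ => v^2) (𝓝 0)).mul (rpow16_taylor (6*s))).const_mul_left x
  have h4 := ((isBigO_refl (fun v : ℝ => v^2) (𝓝 0)).mul (rpow16_taylor (-(6*s)))).const_mul_left y
  simp only [neg_mul, ← sub_eq_add_neg] at h2 h4
  have h3' := h3.congr_right (fun v : ℝ => by ring : ∀ v : ℝ, v^2 * v^3 = v^5)
  have h4' := h4.congr_right (fun v : ℝ => by ring : ∀ v : ℝ, v^2 * v^3 = v^5)
  have hcomb := ((h1.sub h2).sub h3').add h4'
  refine hcomb.congr_left fun v => ?_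
  simp only [KK, PP]
  ring

lemma PP_isBigO (s x y : ℝ) :
    (fun v : ℝ => PP s x y v) =O[𝓝 0] (fun v : ℝ => v) := by
  have hW : Tendsto (fun v : ℝ =>
      (4*s/3) - (x-y)*v + (-2*s^3 - s*(x+y))*v^2 + (5/2)*s^2*(x-y)*v^3) (𝓝 0)
      (𝓝 ((4*s/3) - (x-y)*0 + (-2*s^3 - s*(x+y))*0^2 + (5/2)*s^2*(x-y)*0^3)) := by
    apply Continuous.tendsto
    fun_prop
  have h := (isBigO_refl (fun v : ℝ => v) (𝓝 0)).mul (hW.isBigO_one (F := ℝ))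
  refine (h.congr_left fun v => ?_).congr_right fun v => (mul_one _)
  simp only [PP]; ring

lemma KK_add_PP_isBigO (s x y : ℝ) :
    (fun v : ℝ => KK s x y v + PP s x y v) =O[𝓝 0] (fun v : ℝ => v) := by
  have h5 : (fun v : ℝ => v^5) =O[𝓝 0] (fun v : ℝ => v) := by
    have hW : Tendsto (fun v : ℝ => v^4) (𝓝 0) (𝓝 (0^4)) := by
      apply Continuous.tendsto; fun_prop
    have h := (isBigO_refl (fun v : ℝ => v) (𝓝 0)).mul (hW.isBigO_one (F := ℝ))
    refine (h.congr_left fun v => by ring).congr_right fun v => (mul_one _)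
  have h := ((KK_sub_PP s x y).trans h5).add ((PP_isBigO s x y).const_mul_left 2)
  refine h.congr_left fun v => ?_
  ring

/-- The exact remainder function. -/
noncomputable def NN (s x y v : ℝ) : ℝ :=
  -(2*s/9)*v^2 + ((x-y)/3)*v^3
    + ((4/3)*s*(x+y) - ((-2*s)^3/12 - (x-y)^2/(4*(-2*s)) - (-2*s)*(x+y)/2))*v^4
    + (-(4/3)*s^2*(x-y) - (x^2-y^2)/4)*v^5
    + (KK s x y v)^2/(8*s)

lemma NN_isBigO (s x y : ℝ) (hs : s ≠ 0) :
    (fun v : ℝ => NN s x y v) =O[𝓝 0] (fun v : ℝ => v^6) := by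
  -- Q is the residual quadratic
  set Q : ℝ → ℝ := fun v =>
    ((-2*s^3 - s*(x+y))^2 + 2*(-(x-y))*((5/2)*s^2*(x-y)))/(8*s)
      + ((-2*s^3 - s*(x+y))*((5/2)*s^2*(x-y)))/(4*s)*v
      + (((5/2)*s^2*(x-y))^2)/(8*s)*v^2 with hQdef
  have hid : ∀ v : ℝ, NN s x y v
      = v^6 * Q v + (1/(8*s)) * ((KK s x y v - PP s x y v) * (KK s x y v + PP s x y v)) := by
    intro v
    simp only [NN, PP, hQdef]
    field_simp
    ring
  have h1 : (fun v : ℝ => v^6 * Q v) =O[𝓝 0] (fun v : ℝ => v^6) := by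
    have hW : Tendsto Q (𝓝 0) (𝓝 (Q 0)) := by
      apply Continuous.tendsto; simp only [hQdef]; fun_prop
    have h := (isBigO_refl (fun v : ℝ => v^6) (𝓝 0)).mul (hW.isBigO_one (F := ℝ))
    exact h.congr_right fun v => (mul_one _)
  have h2 := (((KK_sub_PP s x y).mul (KK_add_PP_isBigO s x y)).const_mul_left (1/(8*s))).congr_right
    (fun v : ℝ => by ring : ∀ v : ℝ, v^5 * v = v^6)
  exact (h1.add h2).congr_left fun v => (hid v).symm

set_option maxHeartbeats 1600000 in
/-- under the Pearcey-to-Airy space-time rescaling, the conjugated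
Pearcey Gaussian part approximates the Airy Gaussian factor up to `O(z⁸)` as `z → 0⁺`. -/
theorem pearcey_gaussian_to_airy_gaussian
    (s : ℝ) (hs : s < 0) (x y : ℝ)
    (τ₁ τ₂ ξ η : ℝ → ℝ)
    (hτ₁ : ∀ z : ℝ, τ₁ z = (1 + 6 * s * z ^ 4) / (3 * z ^ 6))
    (hτ₂ : ∀ z : ℝ, τ₂ z = (1 - 6 * s * z ^ 4) / (3 * z ^ 6))
    (hξ : ∀ z : ℝ,
      ξ z = (2 / 27) * (3 * τ₁ z) ^ ((3 : ℝ) / 2) - (3 * τ₁ z) ^ ((1 : ℝ) / 6) * x)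
    (hη : ∀ z : ℝ,
      η z = (2 / 27) * (3 * τ₂ z) ^ ((3 : ℝ) / 2) - (3 * τ₂ z) ^ ((1 : ℝ) / 6) * y) :
    (fun z : ℝ =>
        (3 * τ₁ z) ^ ((1 : ℝ) / 12) * (3 * τ₂ z) ^ ((1 : ℝ) / 12)
          * Real.exp ((PhiFun x s (z ^ 4) - hFun x s (z ^ 4))
              - (PhiFun y (-s) (z ^ 4) - hFun y (-s) (z ^ 4)))
          * pP (τ₂ z - τ₁ z) (ξ z) (η z)
        - pA (-2 * s) x y)
      =O[nhdsWithin (0 : ℝ) (Ioi 0)] (fun z : ℝ => z ^ 8) := by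
  have hsne : s ≠ 0 := ne_of_lt hs
  set l : Filter ℝ := nhdsWithin (0 : ℝ) (Ioi 0) with hldef
  have hz_pos : ∀ᶠ z : ℝ in l, 0 < z := by
    have := self_mem_nhdsWithin (a := (0:ℝ)) (s := Ioi 0)
    filter_upwards [this] with z hz
    exact hz
  have hle : l ≤ 𝓝 (0:ℝ) := nhdsWithin_le_nhds
  have hz4t : Tendsto (fun z : ℝ => z ^ 4) l (𝓝 0) := by
    have h : Tendsto (fun z : ℝ => z ^ 4) (𝓝 0) (𝓝 ((0:ℝ) ^ 4)) :=
      (continuous_pow 4).tendsto 0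
    simpa using h.mono_left hle
  have hz8t : Tendsto (fun z : ℝ => z ^ 8) l (𝓝 0) := by
    have h : Tendsto (fun z : ℝ => z ^ 8) (𝓝 0) (𝓝 ((0:ℝ) ^ 8)) :=
      (continuous_pow 8).tendsto 0
    simpa using h.mono_left hle
  have hz4small : ∀ᶠ z : ℝ in l, z ^ 4 < 1 / (6 * (-s)) := by
    have hns : (0:ℝ) < -s := by linarith
    have hpos : (0:ℝ) < 1 / (6 * (-s)) := by positivity
    exact hz4t.eventually_lt_const hpos
  -- the remainder function
  set R : ℝ → ℝ := fun z => NN s x y (z ^ 4) / z ^ 16 with hRdef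
  -- R is O(z^8)
  have hR : R =O[l] (fun z : ℝ => z ^ 8) := by
    have hcomp := (NN_isBigO s x y hsne).comp_tendsto hz4t
    have h := hcomp.mul (isBigO_refl (fun z : ℝ => ((z:ℝ) ^ 16)⁻¹) l)
    refine h.congr' (Filter.Eventually.of_forall fun z => ?_) ?_
    · simp [hRdef, div_eq_mul_inv, Function.comp]
    · filter_upwards [hz_pos] with z hz
      have hzne : z ≠ 0 := ne_of_gt hz
      simp only [Function.comp_apply]
      rw [mul_inv_eq_iff_eq_mul₀ (pow_ne_zero 16 hzne)]
      ring
  have hRt : Tendsto R l (𝓝 0) := hR.trans_tendsto hz8t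
  -- exp(R) - 1 is O(z^8)
  have hexpatom : (fun u : ℝ => Real.exp u - 1) =O[𝓝 0] (fun u : ℝ => u) := by
    have h := taylor_isBigO (analyticAt_rexp (x := (0:ℝ))) 1
    have hsum : ∀ u : ℝ, (∑ k ∈ Finset.range 1,
        (iteratedDeriv k Real.exp 0 / (Nat.factorial k)) * u ^ k) = 1 := by
      intro u; simp [Finset.sum_range_succ]
    simp only [hsum] at h
    exact h.congr_right fun u => pow_one u
  have hexpm1 : (fun z : ℝ => Real.exp (R z) - 1) =O[l] (fun z : ℝ => z ^ 8) :=
    (hexpatom.comp_tendsto hRt).trans hR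
  have hexpb : (fun z : ℝ => Real.exp (R z)) =O[l] (fun _ : ℝ => (1:ℝ)) := by
    have h : Tendsto (fun z : ℝ => Real.exp (R z)) l (𝓝 (Real.exp 0)) :=
      (Real.continuous_exp.tendsto _).comp hRt
    rw [Real.exp_zero] at h
    exact h.isBigO_one (F := ℝ)
  -- the 12th-root factor minus 1 is O(z^8)
  have hfac : (fun z : ℝ => (1 - 36 * s ^ 2 * z ^ 8) ^ ((1:ℝ)/12) - 1)
      =O[l] (fun z : ℝ => z ^ 8) := by
    have hu : (fun u : ℝ => (1 + 1 * u) ^ ((1:ℝ)/12) - 1) =O[𝓝 0] (fun u : ℝ => u) := by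
      have h := taylor_isBigO (analyticAt_one_add_rpow 1 ((1:ℝ)/12)) 1
      have hsum : ∀ u : ℝ, (∑ k ∈ Finset.range 1,
          (iteratedDeriv k (fun v : ℝ => (1 + 1 * v) ^ ((1:ℝ)/12)) 0 / (Nat.factorial k))
            * u ^ k) = 1 := by
        intro u
        simp [Finset.sum_range_succ, iteratedDeriv_one_add_rpow]
      simp only [hsum] at h
      exact h.congr_right fun u => pow_one u
    have hw : Tendsto (fun z : ℝ => -(36 * s ^ 2) * z ^ 8) l (𝓝 0) := by
      have := hz8t.const_mul (-(36 * s ^ 2))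
      simpa using this
    have h1 := hu.comp_tendsto hw
    have heq : ∀ z : ℝ, 1 + 1 * (-(36 * s ^ 2) * z ^ 8) = 1 - 36 * s ^ 2 * z ^ 8 :=
      fun z => by ring
    have h2 : (fun z : ℝ => -(36 * s ^ 2) * z ^ 8) =O[l] (fun z : ℝ => z ^ 8) :=
      (isBigO_refl _ _).const_mul_left _
    have h3 := h1.trans h2
    refine h3.congr_left fun z => ?_
    simp only [Function.comp_apply]
    rw [heq z]
  -- the conjugated factor minus 1 is O(z^8)
  have hG : (fun z : ℝ => (1 - 36 * s ^ 2 * z ^ 8) ^ ((1:ℝ)/12) * Real.exp (R z) - 1)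
      =O[l] (fun z : ℝ => z ^ 8) := by
    have h1 := (hfac.mul hexpb).congr_right (fun z : ℝ => mul_one _)
    have h := h1.add hexpm1
    refine h.congr_left fun z => ?_
    ring
  -- the key eventual identity
  have hkey : (fun z : ℝ =>
        (3 * τ₁ z) ^ ((1 : ℝ) / 12) * (3 * τ₂ z) ^ ((1 : ℝ) / 12)
          * Real.exp ((PhiFun x s (z ^ 4) - hFun x s (z ^ 4))
              - (PhiFun y (-s) (z ^ 4) - hFun y (-s) (z ^ 4)))
          * pP (τ₂ z - τ₁ z) (ξ z) (η z)
        - pA (-2 * s) x y)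
      =ᶠ[l] (fun z : ℝ => pA (-2 * s) x y
          * ((1 - 36 * s ^ 2 * z ^ 8) ^ ((1:ℝ)/12) * Real.exp (R z) - 1)) := by
    filter_upwards [hz_pos, hz4small] with z hz hz4
    have hzne : z ≠ 0 := ne_of_gt hz
    have h6s : (0:ℝ) < 6 * (-s) := by linarith
    have hz4s : z ^ 4 * (6 * (-s)) < 1 := by
      rw [← lt_div_iff₀ h6s]; exact hz4
    have hpos1 : (0:ℝ) < 1 + 6 * s * z ^ 4 := by nlinarith
    have hpos2 : (0:ℝ) < 1 - 6 * s * z ^ 4 := by nlinarith [pow_pos hz 4]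
    have hpos3 : (0:ℝ) < 1 - 36 * s ^ 2 * z ^ 8 := by nlinarith [mul_pos hpos1 hpos2]
    have hzr : ∀ (n : ℕ) (e : ℝ) (m : ℕ), (n : ℝ) * e = m → ((z ^ n : ℝ)) ^ e = z ^ m := by
      intro n e m h
      rw [← Real.rpow_natCast z n, ← Real.rpow_mul hz.le, h, Real.rpow_natCast]
    have h3τ₁ : 3 * τ₁ z = (1 + 6 * s * z ^ 4) / z ^ 6 := by
      rw [hτ₁ z]; field_simp
    have h3τ₂ : 3 * τ₂ z = (1 - 6 * s * z ^ 4) / z ^ 6 := by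
      rw [hτ₂ z]; field_simp
    have hτd : τ₂ z - τ₁ z = (-4 * s) / z ^ 2 := by
      rw [hτ₁ z, hτ₂ z]
      field_simp
      ring
    have hA1 : (3 * τ₁ z) ^ ((3:ℝ)/2) = (1 + 6 * s * z ^ 4) ^ ((3:ℝ)/2) / z ^ 9 := by
      rw [h3τ₁, Real.div_rpow hpos1.le (by positivity), hzr 6 ((3:ℝ)/2) 9 (by norm_num)]
    have hA2 : (3 * τ₂ z) ^ ((3:ℝ)/2) = (1 - 6 * s * z ^ 4) ^ ((3:ℝ)/2) / z ^ 9 := by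
      rw [h3τ₂, Real.div_rpow hpos2.le (by positivity), hzr 6 ((3:ℝ)/2) 9 (by norm_num)]
    have hB1 : (3 * τ₁ z) ^ ((1:ℝ)/6) = (1 + 6 * s * z ^ 4) ^ ((1:ℝ)/6) / z := by
      rw [h3τ₁, Real.div_rpow hpos1.le (by positivity), hzr 6 ((1:ℝ)/6) 1 (by norm_num),
        pow_one]
    have hB2 : (3 * τ₂ z) ^ ((1:ℝ)/6) = (1 - 6 * s * z ^ 4) ^ ((1:ℝ)/6) / z := by
      rw [h3τ₂, Real.div_rpow hpos2.le (by positivity), hzr 6 ((1:ℝ)/6) 1 (by norm_num),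
        pow_one]
    have hprod : (3 * τ₁ z) ^ ((1:ℝ)/12) * (3 * τ₂ z) ^ ((1:ℝ)/12)
        = (1 - 36 * s ^ 2 * z ^ 8) ^ ((1:ℝ)/12) / z := by
      rw [h3τ₁, h3τ₂, ← Real.mul_rpow (by positivity) (by positivity)]
      have heq : (1 + 6 * s * z ^ 4) / z ^ 6 * ((1 - 6 * s * z ^ 4) / z ^ 6)
          = (1 - 36 * s ^ 2 * z ^ 8) / z ^ 12 := by
        field_simp
        ring
      rw [heq, Real.div_rpow hpos3.le (by positivity), hzr 12 ((1:ℝ)/12) 1 (by norm_num),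
        pow_one]
    have hξη : ξ z - η z = KK s x y (z ^ 4) / z ^ 9 := by
      rw [hξ z, hη z, hA1, hA2, hB1, hB2]
      simp only [KK]
      field_simp
      ring
    have hsqrt : Real.sqrt (2 * Real.pi * (τ₂ z - τ₁ z))
        = Real.sqrt (4 * Real.pi * (-2 * s)) / z := by
      rw [hτd]
      have h1 : 2 * Real.pi * (-4 * s / z ^ 2) = (4 * Real.pi * (-2 * s)) / z ^ 2 := by
        ring
      have hns : (0:ℝ) < -s := by linarith
      have hnn : (0:ℝ) ≤ 4 * Real.pi * (-2 * s) := by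
        have := Real.pi_pos
        nlinarith
      rw [h1, Real.sqrt_div hnn (z ^ 2)]
      congr 1
      rw [pow_two, Real.sqrt_mul_self hz.le]
    have hexp_pP : -(ξ z - η z) ^ 2 / (2 * (τ₂ z - τ₁ z))
        = ((KK s x y (z ^ 4)) ^ 2 / (8 * s)) / z ^ 16 := by
      rw [hξη, hτd]
      field_simp
      ring
    have hDelta : (PhiFun x s (z ^ 4) - hFun x s (z ^ 4))
          - (PhiFun y (-s) (z ^ 4) - hFun y (-s) (z ^ 4))
        = -2*s/(9*(z^4)^2) + (x-y)/(3*z^4) + (4/3)*s*(x+y)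
          + (-(4/3)*s^2*(x-y) - (x^2-y^2)/4)*z^4 := by
      simp only [PhiFun, hFun]
      field_simp
      ring
    have hexp_total : ((PhiFun x s (z ^ 4) - hFun x s (z ^ 4))
          - (PhiFun y (-s) (z ^ 4) - hFun y (-s) (z ^ 4)))
          + ((KK s x y (z ^ 4)) ^ 2 / (8 * s)) / z ^ 16
        = ((-2 * s) ^ 3 / 12 - (x - y) ^ 2 / (4 * (-2 * s)) - (-2 * s) * (x + y) / 2)
          + NN s x y (z ^ 4) / z ^ 16 := by
      rw [hDelta]
      simp only [NN]
      field_simp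
      ring
    have hSpos : (0:ℝ) < Real.sqrt (4 * Real.pi * (-2 * s)) := by
      apply Real.sqrt_pos.mpr
      have := Real.pi_pos
      nlinarith
    -- now assemble
    simp only [pP, pA, hRdef]
    rw [hsqrt, hexp_pP, hprod, one_div_div]
    have hcomb : Real.exp ((PhiFun x s (z ^ 4) - hFun x s (z ^ 4))
          - (PhiFun y (-s) (z ^ 4) - hFun y (-s) (z ^ 4)))
        * Real.exp (((KK s x y (z ^ 4)) ^ 2 / (8 * s)) / z ^ 16)
        = Real.exp ((-2 * s) ^ 3 / 12 - (x - y) ^ 2 / (4 * (-2 * s)) - (-2 * s) * (x + y) / 2)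
          * Real.exp (NN s x y (z ^ 4) / z ^ 16) := by
      rw [← Real.exp_add, ← Real.exp_add, hexp_total]
    set P := (1 - 36 * s ^ 2 * z ^ 8) ^ ((1:ℝ)/12)
    set E1 := Real.exp ((PhiFun x s (z ^ 4) - hFun x s (z ^ 4))
          - (PhiFun y (-s) (z ^ 4) - hFun y (-s) (z ^ 4)))
    set E2 := Real.exp (((KK s x y (z ^ 4)) ^ 2 / (8 * s)) / z ^ 16)
    set E3 := Real.exp ((-2 * s) ^ 3 / 12 - (x - y) ^ 2 / (4 * (-2 * s)) - (-2 * s) * (x + y) / 2)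
    set E4 := Real.exp (NN s x y (z ^ 4) / z ^ 16)
    set S := Real.sqrt (4 * Real.pi * (-2 * s))
    have hstep : P / z * E1 * (z / S * E2) = P / S * (E1 * E2) := by
      field_simp
    rw [hstep, hcomb]
    field_simp
  have hO := (hG.const_mul_left (pA (-2 * s) x y))
  exact hO.congr' hkey.symm EventuallyEq.rfl
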